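/- Let d ≥ 1, let n₁ be a positive integer and b₁,…,b_d ∈ ℕ with gcd(n₁, b₁, …, b_d) = 1. Setting c_l := gcd(n₁, b_l), the product c₁·c₂·⋯·c_d divides n₁^{d−1}. -/
import Mathlib


/-- If `n₁` is a positive integer and `b₁, …, b_d ∈ ℕ` satisfy
`gcd(n₁, b₁, …, b_d) = 1`, then with `c l := gcd n₁ (b l)` the product
`c₁ ⋯ c_d` divides `n₁^{d-1}`. -/
theorem stmt4 (d : ℕ) (hd : 1 ≤ d) (n₁ : ℕ) (hn₁ : 0 < n₁) (b : Fin d → ℕ)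
    (hgcd : Nat.gcd n₁ (Finset.univ.gcd b) = 1)
    (c : Fin d → ℕ) (hc : ∀ l, c l = Nat.gcd n₁ (b l)) :
    (∏ l : Fin d, c l) ∣ n₁ ^ (d - 1) := by
  have hcpos : ∀ l, 0 < c l := fun l => by
    rw [hc]; exact Nat.gcd_pos_of_pos_left _ hn₁
  have hcdvd : ∀ l, c l ∣ n₁ := fun l => by
    rw [hc]; exact Nat.gcd_dvd_left _ _
  have hprodpos : 0 < ∏ l : Fin d, c l := Finset.prod_pos fun l _ => hcpos l
  rw [← Nat.factorization_le_iff_dvd hprodpos.ne' (by positivity)]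
  intro p
  rw [Nat.factorization_prod (fun l _ => (hcpos l).ne'), Nat.factorization_pow]
  simp only [Finsupp.coe_finset_sum, Finset.sum_apply, Finsupp.coe_smul,
    Pi.smul_apply, smul_eq_mul]
  -- find l₀ with p-valuation 0
  have : ∃ l₀ : Fin d, (c l₀).factorization p = 0 := by
    by_contra h
    push_neg at h
    by_cases hp : p.Prime
    · have hpdvd : ∀ l, p ∣ c l := fun l => by
        exact Nat.dvd_of_factorization_pos (h l)
      have hpn : p ∣ n₁ := (hpdvd ⟨0, hd⟩).trans (hcdvd _)
      have hpb : p ∣ Finset.univ.gcd b := by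
        apply Finset.dvd_gcd
        intro l _
        exact (hpdvd l).trans (by rw [hc]; exact Nat.gcd_dvd_right _ _)
      have : p ∣ 1 := hgcd ▸ Nat.dvd_gcd hpn hpb
      exact hp.one_lt.ne' (Nat.dvd_one.mp this)
    · exact (h ⟨0, hd⟩) (Nat.factorization_eq_zero_of_not_prime _ hp)
  obtain ⟨l₀, hl₀⟩ := this
  calc ∑ l : Fin d, (c l).factorization p
      = ∑ l ∈ Finset.univ.erase l₀, (c l).factorization p := by
        rw [← Finset.add_sum_erase _ _ (Finset.mem_univ l₀), hl₀, zero_add]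
    _ ≤ ∑ _l ∈ Finset.univ.erase l₀, n₁.factorization p := by
        apply Finset.sum_le_sum
        intro l _
        exact (Nat.factorization_le_iff_dvd (hcpos l).ne' hn₁.ne').mpr (hcdvd l) p
    _ = (d - 1) * n₁.factorization p := by
        rw [Finset.sum_const, smul_eq_mul]
        congr 1
        rw [Finset.card_erase_of_mem (Finset.mem_univ l₀), Finset.card_univ, Fintype.card_fin]
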